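/- arXiv:0805.3658 — 2 statements merged into one kernel-verified Lean document; each statement's English description precedes it below -/
import Mathlib

section
/- Let λ : [0,∞) → [0,∞) be continuous with Λ(t) = ∫_0^t λ(u) du and Λ(∞) = ∞, let T have density λ(s)e^{−Λ(s)}, let T_0 be exponential with rate 1, and fix C > 0. Define T̃ = min(T, C), δ = 1_{T ≤ C}, and similarly T̃_0, δ_0 for T_0. Then for every bounded measurable g : ℝ × {0,1} → ℝ, E[g(T̃, δ)] = E[g(T̃_0, δ_0) · λ(T̃_0)^{δ_0} e^{−Λ(T̃_0)} e^{T̃_0}]. -/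
open MeasureTheory ProbabilityTheory Set Filter

/-- Univariate Jacod likelihood-ratio formula for a censored one-jump counting process:
if `T` has hazard `λ` (density `λ(s)e^(-Λ(s))` on `(0,∞)`, `Λ(∞) = ∞`), `T₀` is a
unit-rate exponential, and observations are right-censored at `C`, then
`E[g(T̃, δ)] = E[g(T̃₀, δ₀) λ(T̃₀)^δ₀ e^(-Λ(T̃₀)) e^(T̃₀)]`. -/
theorem censored_likelihood_ratio
    {Ω : Type*} [MeasurableSpace Ω] {μ : Measure Ω} [IsProbabilityMeasure μ]
    {Ω₀ : Type*} [MeasurableSpace Ω₀] {μ₀ : Measure Ω₀} [IsProbabilityMeasure μ₀]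
    (lam : ℝ → ℝ) (hlam_nonneg : ∀ u, 0 ≤ lam u) (hlam_cont : Continuous lam)
    (Lam : ℝ → ℝ) (hLam : ∀ t, Lam t = ∫ u in (0:ℝ)..t, lam u)
    (hLam_top : Filter.Tendsto Lam Filter.atTop Filter.atTop)
    (T : Ω → ℝ) (hT : Measurable T)
    (hlawT : Measure.map T μ =
      (volume.restrict (Set.Ioi (0:ℝ))).withDensity
        (fun s => ENNReal.ofReal (lam s * Real.exp (-(Lam s)))))
    (T₀ : Ω₀ → ℝ) (hT₀ : Measurable T₀)
    (hlawT₀ : Measure.map T₀ μ₀ = expMeasure 1)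
    (C : ℝ) (hC : 0 < C)
    (g : ℝ → Bool → ℝ) (hg : ∀ b, Measurable (fun x => g x b))
    (hbdd : ∃ M, ∀ x b, |g x b| ≤ M) :
    ∫ ω, g (min (T ω) C) (decide (T ω ≤ C)) ∂μ =
      ∫ ω, g (min (T₀ ω) C) (decide (T₀ ω ≤ C)) *
        (if T₀ ω ≤ C then lam (min (T₀ ω) C) else 1) *
        Real.exp (-(Lam (min (T₀ ω) C))) * Real.exp (min (T₀ ω) C) ∂μ₀ := by
  obtain ⟨M, hM⟩ := hbdd
  -- FTC facts about Lam
  have hLamfun : Lam = fun t => ∫ u in (0:ℝ)..t, lam u := funext hLam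
  have hLderiv : ∀ s, HasDerivAt Lam (lam s) s := by
    intro s
    rw [hLamfun]
    exact intervalIntegral.integral_hasDerivAt_right
      (hlam_cont.intervalIntegrable _ _)
      hlam_cont.stronglyMeasurable.stronglyMeasurableAtFilter
      hlam_cont.continuousAt
  have hLcont : Continuous Lam := continuous_iff_continuousAt.mpr fun s => (hLderiv s).continuousAt
  have hG : ∀ s, HasDerivAt (fun s => -Real.exp (-(Lam s))) (lam s * Real.exp (-(Lam s))) s := by
    intro s
    have h1 : HasDerivAt (fun s => Real.exp (-(Lam s))) (Real.exp (-(Lam s)) * (-(lam s))) s :=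
      ((hLderiv s).neg).exp
    have : HasDerivAt (fun s => -Real.exp (-(Lam s))) (-(Real.exp (-(Lam s)) * (-(lam s)))) s := h1.neg
    convert this using 1
    ring
  have hGtend : Tendsto (fun s => -Real.exp (-(Lam s))) atTop (nhds 0) := by
    have h1 : Tendsto (fun s => Real.exp (-(Lam s))) atTop (nhds 0) :=
      Real.tendsto_exp_atBot.comp (Filter.tendsto_neg_atBot_iff.mpr hLam_top)
    simpa using h1.neg
  have htail : ∫ s in Ioi C, lam s * Real.exp (-(Lam s)) = Real.exp (-(Lam C)) := by
    have := integral_Ioi_of_hasDerivAt_of_nonneg' (a := C) (fun x _ => hG x)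
      (fun x _ => mul_nonneg (hlam_nonneg x) (Real.exp_nonneg _)) hGtend
    simpa using this
  have htailint : ∀ a : ℝ, IntegrableOn (fun s => lam s * Real.exp (-(Lam s))) (Ioi a) :=
    fun a => integrableOn_Ioi_deriv_of_nonneg' (a := a) (fun x _ => hG x)
      (fun x _ => mul_nonneg (hlam_nonneg x) (Real.exp_nonneg _)) hGtend
  -- the density and the observed functionals
  set d : ℝ → ℝ := fun s => lam s * Real.exp (-(Lam s)) with hd_def
  have hd_cont : Continuous d := hlam_cont.mul (Real.continuous_exp.comp hLcont.neg)
  have hd_nonneg : ∀ s, 0 ≤ d s := fun s => mul_nonneg (hlam_nonneg s) (Real.exp_nonneg _)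
  set f : ℝ → ℝ := fun s => g (min s C) (decide (s ≤ C)) with hf_def
  have hf_eq : ∀ s, f s = if s ≤ C then g s true else g C false := by
    intro s
    by_cases h : s ≤ C
    · simp [hf_def, h, min_eq_left h, decide_eq_true h]
    · simp [hf_def, h, min_eq_right (le_of_lt (not_le.mp h)), decide_eq_false h]
  have hf_meas : Measurable f := by
    rw [show f = fun s => if s ≤ C then g s true else g C false from funext hf_eq]
    exact Measurable.ite measurableSet_Iic (hg true) measurable_const
  have hf_bdd : ∀ s, ‖f s‖ ≤ M := fun s => by
    rw [hf_def, Real.norm_eq_abs]; exact hM _ _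
  set F : ℝ → ℝ := fun s => g (min s C) (decide (s ≤ C)) *
        (if s ≤ C then lam (min s C) else 1) *
        Real.exp (-(Lam (min s C))) * Real.exp (min s C) with hF_def
  have hmin_meas : Measurable fun s : ℝ => min s C := measurable_id.min measurable_const
  have hF_meas : Measurable F := by
    apply Measurable.mul
    apply Measurable.mul
    apply Measurable.mul
    · exact hf_meas
    · exact Measurable.ite measurableSet_Iic (hlam_cont.measurable.comp hmin_meas)
        measurable_const
    · exact (Real.continuous_exp.measurable).comp (hLcont.measurable.comp hmin_meas).neg
    · exact (Real.continuous_exp.measurable).comp hmin_meas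
  -- LHS reduction
  have hL1 : ∫ ω, g (min (T ω) C) (decide (T ω ≤ C)) ∂μ = ∫ s, f s ∂(Measure.map T μ) :=
    (integral_map hT.aemeasurable hf_meas.aestronglyMeasurable).symm
  have hdens_meas : Measurable fun s => (d s).toNNReal :=
    hd_cont.measurable.real_toNNReal
  have hL2 : ∫ s, f s ∂(Measure.map T μ) = ∫ s in Ioi (0:ℝ), d s * f s := by
    rw [hlawT]
    have : (fun s => ENNReal.ofReal (lam s * Real.exp (-(Lam s))))
        = fun s => ((d s).toNNReal : ENNReal) := rfl
    rw [this, integral_withDensity_eq_integral_smul hdens_meas]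
    refine integral_congr_ae (Filter.Eventually.of_forall fun s => ?_)
    simp [NNReal.smul_def, Real.coe_toNNReal _ (hd_nonneg s)]
  -- RHS reduction
  have hR1 : (∫ ω, g (min (T₀ ω) C) (decide (T₀ ω ≤ C)) *
        (if T₀ ω ≤ C then lam (min (T₀ ω) C) else 1) *
        Real.exp (-(Lam (min (T₀ ω) C))) * Real.exp (min (T₀ ω) C) ∂μ₀)
      = ∫ s, F s ∂(Measure.map T₀ μ₀) :=
    (integral_map hT₀.aemeasurable hF_meas.aestronglyMeasurable).symm
  have hpdf : ∀ s, gammaPDFReal 1 1 s = if 0 ≤ s then Real.exp (-s) else 0 := by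
    intro s
    unfold gammaPDFReal
    simp [Real.Gamma_one, Real.rpow_zero]
  have hR2 : ∫ s, F s ∂(Measure.map T₀ μ₀) = ∫ s in Ioi (0:ℝ), Real.exp (-s) * F s := by
    rw [hlawT₀]
    unfold expMeasure gammaMeasure
    have : gammaPDF 1 1 = fun s => ((gammaPDFReal 1 1 s).toNNReal : ENNReal) := rfl
    rw [this, integral_withDensity_eq_integral_smul
      ((measurable_gammaPDFReal 1 1).real_toNNReal)]
    have hstep : ∫ s, ((gammaPDFReal 1 1 s).toNNReal) • F s
        = ∫ s, Set.indicator (Ici (0:ℝ)) (fun s => Real.exp (-s) * F s) s := by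
      refine integral_congr_ae (Filter.Eventually.of_forall fun s => ?_)
      by_cases h : 0 ≤ s
      · simp [NNReal.smul_def, Real.coe_toNNReal _ (gammaPDFReal_nonneg zero_lt_one zero_lt_one s),
          hpdf s, h, Set.indicator_of_mem (mem_Ici.mpr h)]
        exact Or.inl (Real.exp_nonneg _)
      · simp [NNReal.smul_def, hpdf s, h, Set.indicator_of_notMem (fun hs => h (mem_Ici.mp hs))]
    rw [hstep, integral_indicator measurableSet_Ici, integral_Ici_eq_integral_Ioi]
  -- pointwise descriptions
  have hF_le : ∀ s ∈ Ioc (0:ℝ) C, Real.exp (-s) * F s = d s * f s := by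
    rintro s ⟨_, hsC⟩
    have hmin : min s C = s := min_eq_left hsC
    rw [hF_def, hf_def, hd_def]
    simp only [hmin, if_pos hsC]
    rw [Real.exp_neg s]
    field_simp
  have hF_Ioi : ∀ s ∈ Ioi C, Real.exp (-s) * F s
      = (g C false * Real.exp (-(Lam C)) * Real.exp C) * Real.exp (-s) := by
    intro s hs
    have h : ¬ s ≤ C := not_le.mpr hs
    have hmin : min s C = C := min_eq_right (le_of_lt hs)
    rw [hF_def]
    simp only [hmin, if_neg h, decide_eq_false h]
    ring
  have hA_Ioi : ∀ s ∈ Ioi C, d s * f s = g C false * d s := by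
    intro s hs
    have h : ¬ s ≤ C := not_le.mpr hs
    rw [hf_eq s, if_neg h]; ring
  have hA1 : IntegrableOn (fun s => d s * f s) (Ioc 0 C) := by
    have h1 : IntegrableOn d (Icc 0 C) := hd_cont.integrableOn_Icc
    have h2 := (h1.mono_set Ioc_subset_Icc_self).bdd_mul
      hf_meas.aestronglyMeasurable (ae_of_all _ hf_bdd)
    exact IntegrableOn.congr_fun h2 (fun x _ => mul_comm _ _) measurableSet_Ioc
  have hA2 : IntegrableOn (fun s => d s * f s) (Ioi C) :=
    IntegrableOn.congr_fun ((htailint C).const_mul (g C false))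
      (fun x hx => (hA_Ioi x hx).symm) measurableSet_Ioi
  have hB1 : IntegrableOn (fun s => Real.exp (-s) * F s) (Ioc 0 C) :=
    IntegrableOn.congr_fun hA1 (fun x hx => (hF_le x hx).symm) measurableSet_Ioc
  have hexp : IntegrableOn (fun s : ℝ => Real.exp (-s)) (Ioi C) := by
    simpa using exp_neg_integrableOn_Ioi C zero_lt_one
  have hB2 : IntegrableOn (fun s => Real.exp (-s) * F s) (Ioi C) :=
    IntegrableOn.congr_fun (hexp.const_mul (g C false * Real.exp (-(Lam C)) * Real.exp C))
      (fun x hx => (hF_Ioi x hx).symm) measurableSet_Ioi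
  have hdisj : Disjoint (Ioc (0:ℝ) C) (Ioi C) := Ioc_disjoint_Ioi le_rfl
  have hsplit : Ioc (0:ℝ) C ∪ Ioi C = Ioi (0:ℝ) := Ioc_union_Ioi_eq_Ioi hC.le
  have hLsplit : ∫ s in Ioi (0:ℝ), d s * f s
      = (∫ s in Ioc (0:ℝ) C, d s * f s) + ∫ s in Ioi C, d s * f s := by
    rw [← hsplit, setIntegral_union hdisj measurableSet_Ioi hA1 hA2]
  have hRsplit : ∫ s in Ioi (0:ℝ), Real.exp (-s) * F s
      = (∫ s in Ioc (0:ℝ) C, Real.exp (-s) * F s) + ∫ s in Ioi C, Real.exp (-s) * F s := by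
    rw [← hsplit, setIntegral_union hdisj measurableSet_Ioi hB1 hB2]
  have hIoc_eq : ∫ s in Ioc (0:ℝ) C, Real.exp (-s) * F s = ∫ s in Ioc (0:ℝ) C, d s * f s :=
    setIntegral_congr_fun measurableSet_Ioc hF_le
  have hLtail : ∫ s in Ioi C, d s * f s = g C false * Real.exp (-(Lam C)) := by
    rw [setIntegral_congr_fun measurableSet_Ioi hA_Ioi, integral_const_mul, htail]
  have hRtail : ∫ s in Ioi C, Real.exp (-s) * F s = g C false * Real.exp (-(Lam C)) := by
    rw [setIntegral_congr_fun measurableSet_Ioi hF_Ioi, integral_const_mul,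
      integral_exp_neg_Ioi]
    rw [mul_assoc, ← Real.exp_add]
    simp
  rw [hL1, hL2, hR1, hR2, hLsplit, hRsplit, hIoc_eq, hLtail, hRtail]
end

section
/- Let λ : [0,∞) → [0,∞) be continuous, Λ(t) = ∫_0^t λ(u) du, and let T have density λ(s) e^{−Λ(s)}. Let 0 ≤ v_0 < C and suppose P(T > v_0) > 0. Then for the censored data T̃ = min(T, C), δ = 1_{T ≤ C}, and any bounded measurable g, E[g(T̃, δ) | T > v_0] = E[g(T̃_0, δ_0) · λ(T̃_0)^{δ_0} exp(−(Λ(T̃_0) − Λ(v_0))) e^{T̃_0 − v_0} | T_0 > v_0], where T_0 is unit-rate exponential and T̃_0 = min(T_0, C), δ_0 = 1_{T_0 ≤ C}. -/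
open MeasureTheory ProbabilityTheory
open scoped ENNReal NNReal

private lemma restrict_map_integral {Ω : Type*} [MeasurableSpace Ω] (μ : Measure Ω)
    (T : Ω → ℝ) (hT : Measurable T) {s : Set ℝ} (hs : MeasurableSet s)
    (f : ℝ → ℝ) (hf : Measurable f) :
    ∫ ω, f (T ω) ∂(μ.restrict (T ⁻¹' s)) = ∫ t in s, f t ∂(Measure.map T μ) := by
  rw [Measure.restrict_map hT hs,
    integral_map hT.aemeasurable hf.aestronglyMeasurable]

private lemma integral_withDensity_ofReal (ν : Measure ℝ) (d : ℝ → ℝ) (hd_meas : Measurable d)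
    (hd_nonneg : ∀ t, 0 ≤ d t) (f : ℝ → ℝ) :
    ∫ t, f t ∂(ν.withDensity fun t => ENNReal.ofReal (d t)) = ∫ t, d t * f t ∂ν := by
  have h1 : (fun t => ENNReal.ofReal (d t)) = fun t => ((d t).toNNReal : ℝ≥0∞) := rfl
  rw [h1, integral_withDensity_eq_integral_smul hd_meas.real_toNNReal]
  refine integral_congr_ae (Filter.Eventually.of_forall fun t => ?_)
  simp [NNReal.smul_def, Real.coe_toNNReal _ (hd_nonneg t)]

/-- Left-truncated censored likelihood ratio: conditionally on `{T > v₀}`, the law of the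
censored data `(T̃, δ)` for `T` with hazard `λ` is obtained from the unit-rate exponential
reference by the likelihood `λ(T̃₀)^δ₀ exp(-(Λ(T̃₀) - Λ(v₀))) e^(T̃₀ - v₀)`. -/
theorem censored_likelihood_ratio_truncated
    {Ω : Type*} [MeasurableSpace Ω] {μ : Measure Ω} [IsProbabilityMeasure μ]
    {Ω₀ : Type*} [MeasurableSpace Ω₀] {μ₀ : Measure Ω₀} [IsProbabilityMeasure μ₀]
    (lam : ℝ → ℝ) (hlam_nonneg : ∀ u, 0 ≤ lam u) (hlam_cont : Continuous lam)
    (Lam : ℝ → ℝ) (hLam : ∀ t, Lam t = ∫ u in (0:ℝ)..t, lam u)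
    (T : Ω → ℝ) (hT : Measurable T)
    (hlawT : Measure.map T μ =
      (volume.restrict (Set.Ioi (0:ℝ))).withDensity
        (fun s => ENNReal.ofReal (lam s * Real.exp (-(Lam s)))))
    (T₀ : Ω₀ → ℝ) (hT₀ : Measurable T₀)
    (hlawT₀ : Measure.map T₀ μ₀ = expMeasure 1)
    (v₀ C : ℝ) (hv₀ : 0 ≤ v₀) (hv₀C : v₀ < C)
    (hpos : 0 < μ {ω | v₀ < T ω})
    (g : ℝ → Bool → ℝ) (hg : ∀ b, Measurable (fun x => g x b))
    (hbdd : ∃ M, ∀ x b, |g x b| ≤ M) :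
    ∫ ω, g (min (T ω) C) (decide (T ω ≤ C))
        ∂(ProbabilityTheory.cond μ {ω | v₀ < T ω}) =
      ∫ ω, g (min (T₀ ω) C) (decide (T₀ ω ≤ C)) *
        (if T₀ ω ≤ C then lam (min (T₀ ω) C) else 1) *
        Real.exp (-(Lam (min (T₀ ω) C) - Lam v₀)) *
        Real.exp (min (T₀ ω) C - v₀)
        ∂(ProbabilityTheory.cond μ₀ {ω | v₀ < T₀ ω}) := by
  classical
  obtain ⟨M, hM⟩ := hbdd
  have hC0 : (0:ℝ) ≤ C := hv₀.trans hv₀C.le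
  set ρ : ℝ → ℝ := fun t => lam t * Real.exp (-(Lam t)) with hρdef
  have hρ_nonneg : ∀ t, 0 ≤ ρ t := fun t => mul_nonneg (hlam_nonneg t) (Real.exp_nonneg _)
  -- basic properties of Lam
  have hLam_deriv : ∀ t, HasDerivAt Lam (lam t) t := by
    intro t
    have h := (hlam_cont.integral_hasStrictDerivAt 0 t).hasDerivAt
    have he : Lam = fun u => ∫ x in (0:ℝ)..u, lam x := funext hLam
    rw [he]; exact h
  have hLam_diff : Differentiable ℝ Lam := fun t => (hLam_deriv t).differentiableAt
  have hLam_cont : Continuous Lam := hLam_diff.continuous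
  have hρ_cont : Continuous ρ := hlam_cont.mul (Real.continuous_exp.comp hLam_cont.neg)
  have hρ_meas : Measurable ρ := hρ_cont.measurable
  have hLam_mono : Monotone Lam := by
    intro a b hab
    have h1 : Lam b - Lam a = ∫ u in a..b, lam u := by
      rw [hLam a, hLam b, intervalIntegral.integral_interval_sub_left
        (hlam_cont.intervalIntegrable _ _) (hlam_cont.intervalIntegrable _ _)]
    have h2 : 0 ≤ ∫ u in a..b, lam u :=
      intervalIntegral.integral_nonneg hab fun u _ => hlam_nonneg u
    linarith
  have hLam0 : Lam 0 = 0 := by rw [hLam]; simp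
  -- fundamental theorem of calculus for the density
  have hFTC : ∀ a b : ℝ, a ≤ b → ∫ t in Set.Ioc a b, ρ t =
      Real.exp (-(Lam a)) - Real.exp (-(Lam b)) := by
    intro a b hab
    rw [← intervalIntegral.integral_of_le hab]
    have hderiv : ∀ t ∈ Set.uIcc a b,
        HasDerivAt (fun u => -Real.exp (-(Lam u))) (ρ t) t := by
      intro t _
      have h1 : HasDerivAt (fun u => -Real.exp (-(Lam u))) (-(Real.exp (-(Lam t)) * -lam t)) t :=
        ((hLam_deriv t).neg.exp).neg
      convert h1 using 1
      show lam t * Real.exp (-(Lam t)) = _; ring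
    rw [intervalIntegral.integral_eq_sub_of_hasDerivAt hderiv
      (hρ_cont.intervalIntegrable a b)]
    ring
  -- total mass of the law of T
  have hmass : ∫⁻ t in Set.Ioi (0:ℝ), ENNReal.ofReal (ρ t) = 1 := by
    have h1 : Measure.map T μ Set.univ = 1 := by
      rw [Measure.map_apply hT MeasurableSet.univ]; simp
    rw [hlawT, withDensity_apply _ MeasurableSet.univ, setLIntegral_univ] at h1
    exact h1
  have hIoc_lint : ∀ a b : ℝ, a ≤ b →
      ∫⁻ t in Set.Ioc a b, ENNReal.ofReal (ρ t) =
        ENNReal.ofReal (Real.exp (-(Lam a)) - Real.exp (-(Lam b))) := by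
    intro a b hab
    rw [← ofReal_integral_eq_lintegral_ofReal hρ_cont.integrableOn_Ioc
      (Filter.Eventually.of_forall fun t => hρ_nonneg t), hFTC a b hab]
  have hIoi_lint : ∀ a : ℝ, 0 ≤ a →
      ∫⁻ t in Set.Ioi a, ENNReal.ofReal (ρ t) = ENNReal.ofReal (Real.exp (-(Lam a))) := by
    intro a ha
    have hsplit : Set.Ioc 0 a ∪ Set.Ioi a = Set.Ioi (0:ℝ) := Set.Ioc_union_Ioi_eq_Ioi ha
    have hd : Disjoint (Set.Ioc (0:ℝ) a) (Set.Ioi a) := Set.Ioc_disjoint_Ioi le_rfl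
    have h2 : (∫⁻ t in Set.Ioc (0:ℝ) a, ENNReal.ofReal (ρ t))
        + ∫⁻ t in Set.Ioi a, ENNReal.ofReal (ρ t) = 1 := by
      rw [← lintegral_union measurableSet_Ioi hd, hsplit]; exact hmass
    rw [hIoc_lint 0 a ha, hLam0] at h2
    simp only [neg_zero, Real.exp_zero] at h2
    have hle : Real.exp (-(Lam a)) ≤ 1 := by
      rw [Real.exp_le_one_iff]
      simpa using hLam0 ▸ hLam_mono ha
    have key : ENNReal.ofReal (1 - Real.exp (-(Lam a)))
        + ENNReal.ofReal (Real.exp (-(Lam a))) = 1 := by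
      rw [← ENNReal.ofReal_add (by linarith) (Real.exp_nonneg _)]
      simp
    exact (ENNReal.add_right_inj ENNReal.ofReal_ne_top).1 (h2.trans key.symm)
  have hρ_int : ∀ a : ℝ, 0 ≤ a → IntegrableOn ρ (Set.Ioi a) := by
    intro a ha
    refine ⟨hρ_cont.aestronglyMeasurable.restrict, ?_⟩
    rw [hasFiniteIntegral_iff_ofReal (Filter.Eventually.of_forall fun t => hρ_nonneg t)]
    exact (hIoi_lint a ha) ▸ ENNReal.ofReal_lt_top
  have hρIoi_real : ∀ a : ℝ, 0 ≤ a → ∫ t in Set.Ioi a, ρ t = Real.exp (-(Lam a)) := by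
    intro a ha
    rw [integral_eq_lintegral_of_nonneg_ae (Filter.Eventually.of_forall fun t => hρ_nonneg t)
      hρ_cont.aestronglyMeasurable.restrict, hIoi_lint a ha,
      ENNReal.toReal_ofReal (Real.exp_nonneg _)]
  -- the censored functional as a function on ℝ
  set f : ℝ → ℝ := fun t => g (min t C) (decide (t ≤ C)) with hfdef
  have hmin_meas : Measurable fun t : ℝ => min t C := measurable_id.min measurable_const
  have hf_meas : Measurable f := by
    have hf_eq : f = fun t => if t ≤ C then g (min t C) true else g (min t C) false := by
      funext t; by_cases h : t ≤ C <;> simp [hfdef, h]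
    rw [hf_eq]
    exact Measurable.ite (measurableSet_le measurable_id measurable_const)
      ((hg true).comp hmin_meas) ((hg false).comp hmin_meas)
  have hM0 : 0 ≤ M := le_trans (abs_nonneg _) (hM 0 true)
  have hf_bdd : ∀ t, |f t| ≤ M := fun t => hM _ _
  set φ : ℝ → ℝ := fun t => f t * (if t ≤ C then lam (min t C) else 1) *
      Real.exp (-(Lam (min t C) - Lam v₀)) * Real.exp (min t C - v₀) with hφdef
  have hφ_meas : Measurable φ := by
    exact (((hf_meas.mul (Measurable.ite (measurableSet_le measurable_id measurable_const)
      (hlam_cont.measurable.comp hmin_meas) measurable_const)).mul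
      (Real.measurable_exp.comp
        (((hLam_cont.measurable.comp hmin_meas).sub measurable_const).neg))).mul
      (Real.measurable_exp.comp (hmin_meas.sub measurable_const)))
  obtain ⟨B, hB⟩ : ∃ B, ∀ x ∈ Set.Icc v₀ C, ‖lam x‖ ≤ B :=
    isCompact_Icc.exists_bound_of_continuousOn hlam_cont.continuousOn
  have hB1 : (0:ℝ) ≤ max 1 B := le_trans zero_le_one (le_max_left _ _)
  have hφ_bdd : ∀ t, v₀ < t → |φ t| ≤ M * max 1 B * Real.exp (C - v₀) := by
    intro t ht
    have hmin_mem : min t C ∈ Set.Icc v₀ C := ⟨le_min ht.le hv₀C.le, min_le_right _ _⟩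
    have h2 : |if t ≤ C then lam (min t C) else 1| ≤ max 1 B := by
      split_ifs with h
      · exact le_trans (hB _ hmin_mem) (le_max_right _ _)
      · simp
    have h3 : Real.exp (-(Lam (min t C) - Lam v₀)) ≤ 1 := by
      rw [Real.exp_le_one_iff, neg_nonpos, sub_nonneg]
      exact hLam_mono hmin_mem.1
    have h4 : Real.exp (min t C - v₀) ≤ Real.exp (C - v₀) :=
      Real.exp_le_exp.2 (by linarith [hmin_mem.2])
    have habs : |φ t| = |f t| * |if t ≤ C then lam (min t C) else 1| *
        Real.exp (-(Lam (min t C) - Lam v₀)) * Real.exp (min t C - v₀) := by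
      rw [hφdef]
      simp only [abs_mul, abs_of_pos (Real.exp_pos _)]
    rw [habs]
    calc |f t| * |if t ≤ C then lam (min t C) else 1| *
        Real.exp (-(Lam (min t C) - Lam v₀)) * Real.exp (min t C - v₀)
        ≤ M * max 1 B * 1 * Real.exp (C - v₀) := by
          refine mul_le_mul (mul_le_mul (mul_le_mul (hf_bdd t) h2 (abs_nonneg _) hM0) h3
            (Real.exp_nonneg _) (mul_nonneg hM0 hB1)) h4 (Real.exp_nonneg _) ?_
          positivity
      _ = M * max 1 B * Real.exp (C - v₀) := by ring
  -- integrability of integrands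
  have hfρ_int : IntegrableOn (fun t => ρ t * f t) (Set.Ioi v₀) := by
    have h := Integrable.bdd_mul (c := M) (hρ_int v₀ hv₀) hf_meas.aestronglyMeasurable.restrict
      (Filter.Eventually.of_forall fun x => by rw [Real.norm_eq_abs]; exact hf_bdd x)
    exact h.congr (Filter.Eventually.of_forall fun x => mul_comm _ _)
  have hexp_int : IntegrableOn (fun t => Real.exp (-t)) (Set.Ioi v₀) := by
    have h := exp_neg_integrableOn_Ioi v₀ (zero_lt_one (α := ℝ))
    simpa using h
  have hφexp_int : IntegrableOn (fun t => Real.exp (-t) * φ t) (Set.Ioi v₀) := by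
    have h := Integrable.bdd_mul (c := M * max 1 B * Real.exp (C - v₀)) hexp_int
      hφ_meas.aestronglyMeasurable.restrict
      (by
        rw [ae_restrict_iff' measurableSet_Ioi]
        exact Filter.Eventually.of_forall fun t ht => by
          rw [Real.norm_eq_abs]; exact hφ_bdd t ht)
    exact h.congr (Filter.Eventually.of_forall fun x => mul_comm _ _)
  -- measures of the conditioning events
  have hμA : μ {ω | v₀ < T ω} = ENNReal.ofReal (Real.exp (-(Lam v₀))) := by
    have h0 : {ω | v₀ < T ω} = T ⁻¹' Set.Ioi v₀ := rfl
    rw [h0, ← Measure.map_apply hT measurableSet_Ioi, hlawT,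
      withDensity_apply _ measurableSet_Ioi, Measure.restrict_restrict measurableSet_Ioi,
      Set.Ioi_inter_Ioi, sup_eq_left.2 hv₀]
    exact hIoi_lint v₀ hv₀
  have hexpMeasure_def : expMeasure 1 = volume.withDensity (exponentialPDF 1) := rfl
  have hexp_pdf_eq : ∀ᵐ t ∂(volume.restrict (Set.Ioi v₀)),
      exponentialPDF 1 t = ENNReal.ofReal (Real.exp (-t)) := by
    rw [ae_restrict_iff' measurableSet_Ioi]
    refine Filter.Eventually.of_forall fun t ht => ?_
    rw [exponentialPDF_of_nonneg (le_of_lt (lt_of_le_of_lt hv₀ ht))]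
    norm_num
  have hμ₀A : μ₀ {ω | v₀ < T₀ ω} = ENNReal.ofReal (Real.exp (-v₀)) := by
    have h0 : {ω | v₀ < T₀ ω} = T₀ ⁻¹' Set.Ioi v₀ := rfl
    have hc : ∫⁻ t in Set.Ioi v₀, exponentialPDF 1 t =
        ∫⁻ t in Set.Ioi v₀, ENNReal.ofReal (Real.exp (-t)) := by
      refine setLIntegral_congr_fun measurableSet_Ioi
        (fun t ht => ?_)
      rw [exponentialPDF_of_nonneg (le_of_lt (lt_of_le_of_lt hv₀ ht))]
      norm_num
    rw [h0, ← Measure.map_apply hT₀ measurableSet_Ioi, hlawT₀, hexpMeasure_def,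
      withDensity_apply _ measurableSet_Ioi, hc,
      ← ofReal_integral_eq_lintegral_ofReal hexp_int
        (Filter.Eventually.of_forall fun t => Real.exp_nonneg _),
      integral_exp_neg_Ioi]
  -- reduce both sides to integrals over ℝ
  have hLHS : ∫ ω, g (min (T ω) C) (decide (T ω ≤ C))
      ∂(ProbabilityTheory.cond μ {ω | v₀ < T ω}) =
      Real.exp (Lam v₀) * ∫ t in Set.Ioi v₀, ρ t * f t := by
    rw [ProbabilityTheory.cond, integral_smul_measure, hμA]
    have hgoal : (fun ω => g (min (T ω) C) (decide (T ω ≤ C))) = fun ω => f (T ω) := rfl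
    have h1 : ∫ ω in {ω | v₀ < T ω}, f (T ω) ∂μ = ∫ t in Set.Ioi v₀, f t ∂(Measure.map T μ) :=
      restrict_map_integral μ T hT measurableSet_Ioi f hf_meas
    rw [hgoal, h1, hlawT,
      restrict_withDensity measurableSet_Ioi,
      Measure.restrict_restrict measurableSet_Ioi, Set.Ioi_inter_Ioi, sup_eq_left.2 hv₀,
      integral_withDensity_ofReal _ _ hρ_meas hρ_nonneg f]
    rw [smul_eq_mul, ENNReal.toReal_inv, ENNReal.toReal_ofReal (Real.exp_nonneg _),
      Real.exp_neg, inv_inv]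
  have hRHS : (∫ ω, g (min (T₀ ω) C) (decide (T₀ ω ≤ C)) *
        (if T₀ ω ≤ C then lam (min (T₀ ω) C) else 1) *
        Real.exp (-(Lam (min (T₀ ω) C) - Lam v₀)) *
        Real.exp (min (T₀ ω) C - v₀)
        ∂(ProbabilityTheory.cond μ₀ {ω | v₀ < T₀ ω})) =
      Real.exp v₀ * ∫ t in Set.Ioi v₀, Real.exp (-t) * φ t := by
    rw [ProbabilityTheory.cond, integral_smul_measure, hμ₀A]
    have hgoal : (fun ω => g (min (T₀ ω) C) (decide (T₀ ω ≤ C)) *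
        (if T₀ ω ≤ C then lam (min (T₀ ω) C) else 1) *
        Real.exp (-(Lam (min (T₀ ω) C) - Lam v₀)) *
        Real.exp (min (T₀ ω) C - v₀)) = fun ω => φ (T₀ ω) := rfl
    have h1 : ∫ ω in {ω | v₀ < T₀ ω}, φ (T₀ ω) ∂μ₀ =
        ∫ t in Set.Ioi v₀, φ t ∂(Measure.map T₀ μ₀) :=
      restrict_map_integral μ₀ T₀ hT₀ measurableSet_Ioi φ hφ_meas
    rw [hgoal, h1, hlawT₀, hexpMeasure_def,
      restrict_withDensity measurableSet_Ioi, withDensity_congr_ae hexp_pdf_eq,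
      integral_withDensity_ofReal _ (fun t => Real.exp (-t))
        ((Real.continuous_exp.comp continuous_neg).measurable)
        (fun t => Real.exp_nonneg _) φ]
    rw [smul_eq_mul, ENNReal.toReal_inv, ENNReal.toReal_ofReal (Real.exp_nonneg _),
      Real.exp_neg, inv_inv]
  -- split the integrals at C
  set K : ℝ := g C false with hK
  have hsub1 : Set.Ioc v₀ C ⊆ Set.Ioi v₀ := Set.Ioc_subset_Ioi_self
  have hsub2 : Set.Ioi C ⊆ Set.Ioi v₀ := Set.Ioi_subset_Ioi hv₀C.le
  have hLcore : ∫ t in Set.Ioi v₀, ρ t * f t =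
      (∫ t in Set.Ioc v₀ C, ρ t * f t) + K * Real.exp (-(Lam C)) := by
    rw [← Set.Ioc_union_Ioi_eq_Ioi hv₀C.le,
      setIntegral_union Set.Ioc_disjoint_Ioi_same measurableSet_Ioi
        (hfρ_int.mono_set hsub1) (hfρ_int.mono_set hsub2)]
    congr 1
    have heq : Set.EqOn (fun t => ρ t * f t) (fun t => ρ t * K) (Set.Ioi C) := by
      intro t ht
      have h1 : ¬ (t ≤ C) := not_le.2 ht
      simp [hfdef, hK, min_eq_right (le_of_lt (Set.mem_Ioi.1 ht)), h1]
    rw [setIntegral_congr_fun measurableSet_Ioi heq, integral_mul_const,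
      hρIoi_real C hC0]
    ring
  have hRcore : ∫ t in Set.Ioi v₀, Real.exp (-t) * φ t =
      Real.exp (Lam v₀ - v₀) * (∫ t in Set.Ioc v₀ C, ρ t * f t)
        + K * Real.exp (-(Lam C - Lam v₀)) * Real.exp (C - v₀) * Real.exp (-C) := by
    rw [← Set.Ioc_union_Ioi_eq_Ioi hv₀C.le,
      setIntegral_union Set.Ioc_disjoint_Ioi_same measurableSet_Ioi
        (hφexp_int.mono_set hsub1) (hφexp_int.mono_set hsub2)]
    congr 1
    · have heq : Set.EqOn (fun t => Real.exp (-t) * φ t)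
          (fun t => Real.exp (Lam v₀ - v₀) * (ρ t * f t)) (Set.Ioc v₀ C) := by
        intro t ht
        have hmin : min t C = t := min_eq_left ht.2
        have hexp : Real.exp (-t) * Real.exp (-(Lam t - Lam v₀)) * Real.exp (t - v₀)
            = Real.exp (Lam v₀ - v₀) * Real.exp (-(Lam t)) := by
          rw [← Real.exp_add, ← Real.exp_add, ← Real.exp_add]
          congr 1; ring
        simp only [hφdef, hρdef, hmin, if_pos ht.2]
        calc Real.exp (-t) * (f t * lam t * Real.exp (-(Lam t - Lam v₀)) *
              Real.exp (t - v₀))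
            = f t * lam t * (Real.exp (-t) * Real.exp (-(Lam t - Lam v₀)) *
              Real.exp (t - v₀)) := by ring
          _ = f t * lam t * (Real.exp (Lam v₀ - v₀) * Real.exp (-(Lam t))) := by rw [hexp]
          _ = Real.exp (Lam v₀ - v₀) * (lam t * Real.exp (-(Lam t)) * f t) := by ring
      rw [setIntegral_congr_fun measurableSet_Ioc heq, integral_const_mul]
    · have heq : Set.EqOn (fun t => Real.exp (-t) * φ t)
          (fun t => Real.exp (-t) * (K * Real.exp (-(Lam C - Lam v₀)) *
            Real.exp (C - v₀))) (Set.Ioi C) := by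
        intro t ht
        have h1 : ¬ (t ≤ C) := not_le.2 ht
        simp only [hφdef, hfdef, hK, min_eq_right (le_of_lt (Set.mem_Ioi.1 ht)), if_neg h1,
          decide_eq_false h1]
        ring
      rw [setIntegral_congr_fun measurableSet_Ioi heq, integral_mul_const,
        integral_exp_neg_Ioi]
      ring
  rw [hLHS, hRHS, hLcore, hRcore]
  simp only [Real.exp_sub, Real.exp_neg]
  field_simp
end
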